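/- Let b_0 < b_1 < ... < b_{m+1} be real numbers (borders), let J be a finite family of jobs all contained in [b_0, b_{m+1}], and let K be a positive integer. For each i = 1, ..., m+1 let S_i be a pairwise disjoint subfamily of maximum cardinality among the jobs of J contained in [b_{i-1}, b_i], and suppose |S_i| >= K for every i. Then for every pairwise disjoint subfamily A of J, one has (K+1) * (|S_1| + ... + |S_{m+1}|) >= K * |A|; i.e., the union of the per-region optimal solutions is a (K+1)/K-approximation of a maximum pairwise disjoint subfamily. -/

import Mathlib

/-- A finite family of jobs (intervals `[s, e]`, represented as pairs `(s, e)`)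
is pairwise disjoint (a single-machine schedule / independent set). -/
def JobsDisjoint (F : Finset (ℝ × ℝ)) : Prop :=
  ∀ j ∈ F, ∀ j' ∈ F, j ≠ j' → Disjoint (Set.Icc j.1 j.2) (Set.Icc j'.1 j'.2)

lemma jobsDisjoint_subset {F G : Finset (ℝ × ℝ)} (h : F ⊆ G) (hG : JobsDisjoint G) :
    JobsDisjoint F := fun j hj j' hj' hne => hG j (h hj) j' (h hj') hne

lemma classify (m : ℕ) (b : Fin (m + 2) → ℝ) (hb : StrictMono b)
    (j : ℝ × ℝ) (hj1 : j.1 < j.2)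
    (hj2 : Set.Icc j.1 j.2 ⊆ Set.Icc (b 0) (b (Fin.last (m + 1)))) :
    (∃ i : Fin (m+1), Set.Icc j.1 j.2 ⊆ Set.Icc (b i.castSucc) (b i.succ)) ∨
    (∃ k : Fin m, j.1 < b k.succ.castSucc ∧ b k.succ.castSucc < j.2) := by
  have hmem : j.1 ∈ Set.Icc (b 0) (b (Fin.last (m+1))) := hj2 ⟨le_refl _, hj1.le⟩
  have hmem2 : j.2 ∈ Set.Icc (b 0) (b (Fin.last (m+1))) := hj2 ⟨hj1.le, le_refl _⟩
  set F := Finset.univ.filter (fun i : Fin (m+2) => b i ≤ j.1) with hF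
  have hne : F.Nonempty := ⟨0, by simp [hF, hmem.1]⟩
  set n := F.max' hne with hn
  have hbn : b n ≤ j.1 := (Finset.mem_filter.mp (F.max'_mem hne)).2
  have hmax : ∀ i, b i ≤ j.1 → i ≤ n := fun i hi => F.le_max' i (by simp [hF, hi])
  have hnlast : (n : ℕ) < m + 1 := by
    rcases lt_or_eq_of_le (Fin.le_last n) with h | h
    · exact h
    · exfalso
      rw [h] at hbn
      exact absurd hmem2.2 (not_le.mpr (lt_of_le_of_lt hbn hj1))
  set i' : Fin (m+1) := ⟨(n : ℕ), hnlast⟩ with hi'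
  have hcast : i'.castSucc = n := by ext; simp [hi']
  by_cases h2 : j.2 ≤ b i'.succ
  · left
    exact ⟨i', Set.Icc_subset_Icc (by rw [hcast]; exact hbn) h2⟩
  · push_neg at h2
    have hlt1 : j.1 < b i'.succ := by
      by_contra hle
      push_neg at hle
      have := hmax i'.succ hle
      have : (i'.succ : Fin (m+2)) ≤ i'.castSucc := by rwa [hcast]
      exact absurd this (not_le.mpr (Fin.castSucc_lt_succ : i'.castSucc < i'.succ))
    have hsm : (n : ℕ) < m := by
      by_contra hnm
      push_neg at hnm
      have : (n : ℕ) = m := le_antisymm (by omega) hnm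
      have hsucc : i'.succ = Fin.last (m+1) := by
        ext; simp [hi', this]
      rw [hsucc] at h2
      exact absurd hmem2.2 (not_le.mpr h2)
    right
    have heq : (⟨(n : ℕ), hsm⟩ : Fin m).succ.castSucc = (i'.succ : Fin (m+2)) := by
      ext; simp [hi']
    exact ⟨⟨(n : ℕ), hsm⟩, by rw [heq]; exact hlt1, by rw [heq]; exact h2⟩

theorem stmt0 (m : ℕ) (b : Fin (m + 2) → ℝ) (hb : StrictMono b)
    (J : Finset (ℝ × ℝ))
    (hJ : ∀ j ∈ J, j.1 < j.2 ∧ Set.Icc j.1 j.2 ⊆ Set.Icc (b 0) (b (Fin.last (m + 1))))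
    (K : ℕ) (hK : 0 < K)
    (S : Fin (m + 1) → Finset (ℝ × ℝ))
    (hSsub : ∀ i, S i ⊆ J)
    (hScont : ∀ i, ∀ j ∈ S i, Set.Icc j.1 j.2 ⊆ Set.Icc (b i.castSucc) (b i.succ))
    (hSdisj : ∀ i, JobsDisjoint (S i))
    (hSmax : ∀ i, ∀ T ⊆ J,
      (∀ j ∈ T, Set.Icc j.1 j.2 ⊆ Set.Icc (b i.castSucc) (b i.succ)) →
      JobsDisjoint T → T.card ≤ (S i).card)
    (hSK : ∀ i, K ≤ (S i).card)
    (A : Finset (ℝ × ℝ)) (hA : A ⊆ J) (hAdisj : JobsDisjoint A) :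
    K * A.card ≤ (K + 1) * ∑ i, (S i).card := by
  classical
  set idx : (ℝ × ℝ) → (Fin (m+1) ⊕ Fin m) := fun j =>
    if h : ∃ i : Fin (m+1), Set.Icc j.1 j.2 ⊆ Set.Icc (b i.castSucc) (b i.succ) then
      Sum.inl h.choose
    else if h2 : ∃ k : Fin m, j.1 < b k.succ.castSucc ∧ b k.succ.castSucc < j.2 then
      Sum.inr h2.choose
    else Sum.inl 0 with hidx
  have keyL : ∀ j ∈ A, ∀ i, idx j = Sum.inl i →
      Set.Icc j.1 j.2 ⊆ Set.Icc (b i.castSucc) (b i.succ) := by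
    intro j hjA i hji
    by_cases h : ∃ i' : Fin (m+1), Set.Icc j.1 j.2 ⊆ Set.Icc (b i'.castSucc) (b i'.succ)
    · simp only [hidx, dif_pos h] at hji
      obtain rfl := Sum.inl.inj hji
      exact h.choose_spec
    · exfalso
      rcases classify m b hb j (hJ j (hA hjA)).1 (hJ j (hA hjA)).2 with hc | hc
      · exact h hc
      · simp only [hidx, dif_neg h, dif_pos hc] at hji
        cases hji
  have keyR : ∀ j ∈ A, ∀ k, idx j = Sum.inr k →
      j.1 < b k.succ.castSucc ∧ b k.succ.castSucc < j.2 := by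
    intro j hjA k hji
    by_cases h : ∃ i' : Fin (m+1), Set.Icc j.1 j.2 ⊆ Set.Icc (b i'.castSucc) (b i'.succ)
    · simp only [hidx, dif_pos h] at hji
      cases hji
    · rcases classify m b hb j (hJ j (hA hjA)).1 (hJ j (hA hjA)).2 with hc | hc
      · exact absurd hc h
      · simp only [hidx, dif_neg h, dif_pos hc] at hji
        obtain rfl := Sum.inr.inj hji
        exact hc.choose_spec
  have hfib : A.card = ∑ t : Fin (m+1) ⊕ Fin m,
      (A.filter (fun j => idx j = t)).card :=
    Finset.card_eq_sum_card_fiberwise (fun x _ => Finset.mem_univ (idx x))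
  rw [Fintype.sum_sum_type] at hfib
  have hL : ∀ i : Fin (m+1),
      (A.filter (fun j => idx j = Sum.inl i)).card ≤ (S i).card := by
    intro i
    refine hSmax i _ ((Finset.filter_subset _ _).trans hA) ?_
      (jobsDisjoint_subset (Finset.filter_subset _ _) hAdisj)
    intro j hj
    rw [Finset.mem_filter] at hj
    exact keyL j hj.1 i hj.2
  have hR : ∀ k : Fin m,
      (A.filter (fun j => idx j = Sum.inr k)).card ≤ 1 := by
    intro k
    rw [Finset.card_le_one]
    intro j hj j' hj'
    rw [Finset.mem_filter] at hj hj'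
    by_contra hne
    have h1 := keyR j hj.1 k hj.2
    have h2 := keyR j' hj'.1 k hj'.2
    have hd := hAdisj j hj.1 j' hj'.1 hne
    exact Set.disjoint_left.mp hd ⟨h1.1.le, h1.2.le⟩ ⟨h2.1.le, h2.2.le⟩
  have hsum1 : ∑ i : Fin (m+1), (A.filter (fun j => idx j = Sum.inl i)).card
      ≤ ∑ i, (S i).card := Finset.sum_le_sum (fun i _ => hL i)
  have hsum2 : ∑ k : Fin m, (A.filter (fun j => idx j = Sum.inr k)).card ≤ m := by
    calc ∑ k : Fin m, (A.filter (fun j => idx j = Sum.inr k)).card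
        ≤ ∑ _k : Fin m, 1 := Finset.sum_le_sum (fun k _ => hR k)
      _ = m := by simp
  have hcard : A.card ≤ (∑ i, (S i).card) + m := by omega
  have hbig : (m + 1) * K ≤ ∑ i, (S i).card := by
    calc (m + 1) * K = ∑ _i : Fin (m+1), K := by simp [mul_comm]
      _ ≤ ∑ i, (S i).card := Finset.sum_le_sum (fun i _ => hSK i)
  nlinarith [hcard, hbig]
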